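/- Let ρ be a (1,1,2)-separable four-partite state on H_1^{d_1} ⊗ H_2^{d_2} ⊗ H_3^{d_3} ⊗ H_4^{d_4} with 2 ≤ d_1 ≤ d_2 ≤ d_3 ≤ d_4, i.e., a convex combination of pure states of the form |φ_1⟩ ⊗ |φ_2⟩ ⊗ |φ_{34}⟩. Then ‖T^{(1234)}‖² ≤ 2⁴ (d_1 − 1)(d_2 − 1)(d_3² − 1)/(d_1 d_2 d_3²). -/

import Mathlib

open Matrix BigOperators

/-- The four-fold Kronecker (tensor) product of square matrices, given entrywise. -/
def kron4 {d1 d2 d3 d4 : ℕ} (M1 : Matrix (Fin d1) (Fin d1) ℂ) (M2 : Matrix (Fin d2) (Fin d2) ℂ)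
    (M3 : Matrix (Fin d3) (Fin d3) ℂ) (M4 : Matrix (Fin d4) (Fin d4) ℂ) :
    Matrix (Fin d1 × Fin d2 × Fin d3 × Fin d4) (Fin d1 × Fin d2 × Fin d3 × Fin d4) ℂ :=
  fun a b => M1 a.1 b.1 * M2 a.2.1 b.2.1 * M3 a.2.2.1 b.2.2.1 * M4 a.2.2.2 b.2.2.2



lemma bessel_sum {ι m : Type*} [Fintype ι] [Fintype m] [DecidableEq ι]
    (v : ι → m → ℂ) (hv : ∀ i j, ∑ p, (starRingEnd ℂ) (v i p) * v j p = if i = j then 1 else 0)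
    (x : m → ℂ) :
    ∑ i, ‖∑ p, (starRingEnd ℂ) (v i p) * x p‖ ^ 2 ≤ ∑ p, ‖x p‖ ^ 2 := by
  classical
  let V : ι → EuclideanSpace ℂ m := fun i => (WithLp.equiv 2 _).symm (v i)
  let X : EuclideanSpace ℂ m := (WithLp.equiv 2 _).symm x
  have hV : Orthonormal ℂ V := by
    rw [orthonormal_iff_ite]
    intro i j
    simpa [V, PiLp.inner_apply, RCLike.inner_apply, mul_comm] using hv i j
  have h := hV.sum_inner_products_le (s := (Finset.univ : Finset ι)) X
  have hnorm : ‖X‖ ^ 2 = ∑ p, ‖x p‖ ^ 2 := by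
    rw [EuclideanSpace.norm_eq, Real.sq_sqrt]
    · rfl
    · positivity
  have hinner : ∀ i, (inner ℂ (V i) X : ℂ) = ∑ p, (starRingEnd ℂ) (v i p) * x p := by
    intro i
    simp [V, X, PiLp.inner_apply, RCLike.inner_apply, mul_comm]
  calc ∑ i, ‖∑ p, (starRingEnd ℂ) (v i p) * x p‖ ^ 2
      = ∑ i, ‖(inner ℂ (V i) X : ℂ)‖ ^ 2 := by simp_rw [hinner]
    _ ≤ ‖X‖ ^ 2 := h
    _ = ∑ p, ‖x p‖ ^ 2 := hnorm

lemma bessel_scaled {ι m : Type*} [Fintype ι] [Fintype m] [DecidableEq ι]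
    (C : ℝ) (hC : 0 < C)
    (v : ι → m → ℂ) (hv : ∀ i j, ∑ p, (starRingEnd ℂ) (v i p) * v j p = if i = j then (C : ℂ) else 0)
    (x : m → ℂ) :
    ∑ i, ‖∑ p, (starRingEnd ℂ) (v i p) * x p‖ ^ 2 ≤ C * ∑ p, ‖x p‖ ^ 2 := by
  have hs : (0:ℝ) < Real.sqrt C := Real.sqrt_pos.2 hC
  have hs2 : (Real.sqrt C : ℂ) * (Real.sqrt C : ℂ) = (C : ℂ) := by
    rw [← Complex.ofReal_mul, Real.mul_self_sqrt hC.le]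
  have hsne : (Real.sqrt C : ℂ) ≠ 0 := by
    simp [Complex.ofReal_ne_zero, hs.ne']
  have h := bessel_sum (fun i p => v i p / (Real.sqrt C : ℂ)) ?_ x
  · have key : ∀ i, ‖∑ p, (starRingEnd ℂ) (v i p / (Real.sqrt C : ℂ)) * x p‖ ^ 2
        = ‖∑ p, (starRingEnd ℂ) (v i p) * x p‖ ^ 2 / C := by
      intro i
      have : ∑ p, (starRingEnd ℂ) (v i p / (Real.sqrt C : ℂ)) * x p
          = (∑ p, (starRingEnd ℂ) (v i p) * x p) / (Real.sqrt C : ℂ) := by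
        rw [Finset.sum_div]
        refine Finset.sum_congr rfl fun p _ => ?_
        rw [_root_.map_div₀, Complex.conj_ofReal]
        ring
      rw [this, norm_div, div_pow, Complex.norm_real, Real.norm_eq_abs,
        abs_of_pos hs, Real.sq_sqrt hC.le]
    calc ∑ i, ‖∑ p, (starRingEnd ℂ) (v i p) * x p‖ ^ 2
        = (∑ i, ‖∑ p, (starRingEnd ℂ) (v i p / (Real.sqrt C : ℂ)) * x p‖ ^ 2) * C := by
          rw [Finset.sum_mul]
          refine Finset.sum_congr rfl fun i _ => ?_
          rw [key i, div_mul_cancel₀]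
          exact hC.ne'
      _ ≤ (∑ p, ‖x p‖ ^ 2) * C := by
          exact mul_le_mul_of_nonneg_right h hC.le
      _ = C * ∑ p, ‖x p‖ ^ 2 := mul_comm _ _
  · intro i j
    have : ∑ p, (starRingEnd ℂ) (v i p / (Real.sqrt C : ℂ)) * (v j p / (Real.sqrt C : ℂ))
        = (∑ p, (starRingEnd ℂ) (v i p) * v j p) / (C : ℂ) := by
      rw [← hs2, Finset.sum_div]
      refine Finset.sum_congr rfl fun p _ => ?_
      rw [_root_.map_div₀, Complex.conj_ofReal]
      field_simp
    rw [this, hv]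
    split
    · rw [div_self]
      simpa [Complex.ofReal_ne_zero] using hC.ne'
    · simp
lemma single_bound {d n : ℕ} (hd : 1 ≤ d) (lam : Fin n → Matrix (Fin d) (Fin d) ℂ)
    (hherm : ∀ i, (lam i).IsHermitian) (htr : ∀ i, (lam i).trace = 0)
    (horth : ∀ i j, (lam i * lam j).trace = if i = j then 2 else 0)
    (φ : Fin d → ℂ) (hφ : ∑ y, ‖φ y‖ ^ 2 = 1) :
    ∑ i, ‖∑ a, ∑ b, φ a * (starRingEnd ℂ) (φ b) * lam i b a‖ ^ 2 ≤ 2 * ((d : ℝ) - 1) / d := by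
  classical
  have hd0 : (0:ℝ) < d := by exact_mod_cast Nat.lt_of_lt_of_le Nat.zero_lt_one hd
  set x : Fin d × Fin d → ℂ :=
    fun p => φ p.1 * (starRingEnd ℂ) (φ p.2) - (if p.1 = p.2 then ((d:ℂ))⁻¹ else 0) with hxdef
  have hconj : ∀ i (a b : Fin d), (starRingEnd ℂ) (lam i a b) = lam i b a := by
    intro i a b; exact (hherm i).apply b a
  have hv : ∀ i j, ∑ p : Fin d × Fin d, (starRingEnd ℂ) (lam i p.1 p.2) * lam j p.1 p.2
      = if i = j then (2:ℂ) else 0 := by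
    intro i j
    calc ∑ p : Fin d × Fin d, (starRingEnd ℂ) (lam i p.1 p.2) * lam j p.1 p.2
        = ∑ a, ∑ b, lam j a b * lam i b a := by
          rw [Fintype.sum_prod_type]
          refine Finset.sum_congr rfl fun a _ => Finset.sum_congr rfl fun b _ => ?_
          rw [hconj i a b]; ring
      _ = (lam j * lam i).trace := by
          simp [Matrix.trace, Matrix.mul_apply, Matrix.diag]
      _ = if i = j then 2 else 0 := by rw [horth]; simp [eq_comm]
  have h := bessel_scaled 2 (by norm_num) (fun i p => lam i p.1 p.2) hv x
  have hinner : ∀ i, (∑ p : Fin d × Fin d, (starRingEnd ℂ) (lam i p.1 p.2) * x p)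
      = ∑ a, ∑ b, φ a * (starRingEnd ℂ) (φ b) * lam i b a := by
    intro i
    rw [Fintype.sum_prod_type]
    have key : ∀ a b : Fin d, (starRingEnd ℂ) (lam i a b) * x (a, b)
        = φ a * (starRingEnd ℂ) (φ b) * lam i b a - (if a = b then lam i b a * (d:ℂ)⁻¹ else 0) := by
      intro a b
      rw [hconj]
      simp only [hxdef]
      split <;> ring
    simp_rw [key, Finset.sum_sub_distrib]
    have z1 : ∑ a, ∑ b, (if a = b then lam i b a * (d:ℂ)⁻¹ else 0) = 0 := by
      have e : ∀ a : Fin d, ∑ b, (if a = b then lam i b a * (d:ℂ)⁻¹ else 0)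
          = lam i a a * (d:ℂ)⁻¹ := by
        intro a; simp
      simp_rw [e, ← Finset.sum_mul]
      have : ∑ a, lam i a a = (lam i).trace := by simp [Matrix.trace, Matrix.diag]
      rw [this, htr, zero_mul]
    rw [z1, sub_zero]
  have hx : ∑ p : Fin d × Fin d, ‖x p‖ ^ 2 = 1 - (d:ℝ)⁻¹ := by
    have key : ∀ a b : Fin d, ‖x (a, b)‖ ^ 2
        = ‖φ a‖ ^ 2 * ‖φ b‖ ^ 2 + (if a = b then (d:ℝ)⁻¹ ^ 2 - 2 * ‖φ a‖ ^ 2 * (d:ℝ)⁻¹ else 0) := by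
      intro a b
      by_cases hab : a = b
      · subst hab
        have h1 : x (a, a) = ((‖φ a‖ ^ 2 - (d:ℝ)⁻¹ : ℝ) : ℂ) := by
          simp only [hxdef, if_pos rfl]
          rw [Complex.mul_conj]
          push_cast
          rw [Complex.normSq_eq_norm_sq]
          push_cast
          ring
        rw [h1, Complex.norm_real, Real.norm_eq_abs, if_pos rfl, sq_abs]
        ring
      · have h1 : x (a, b) = φ a * (starRingEnd ℂ) (φ b) := by
          simp only [hxdef, if_neg hab, sub_zero]
        rw [h1, if_neg hab, norm_mul, mul_pow, RCLike.norm_conj, add_zero]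
    rw [Fintype.sum_prod_type]
    simp_rw [key, Finset.sum_add_distrib]
    have e1 : ∑ a, ∑ b, ‖φ a‖ ^ 2 * ‖φ b‖ ^ 2 = 1 := by
      rw [← Finset.sum_mul_sum, hφ, mul_one]
    have e2 : ∑ a : Fin d, ∑ b : Fin d,
        (if a = b then (d:ℝ)⁻¹ ^ 2 - 2 * ‖φ a‖ ^ 2 * (d:ℝ)⁻¹ else 0) = - (d:ℝ)⁻¹ := by
      have e : ∀ a : Fin d, ∑ b : Fin d,
          (if a = b then (d:ℝ)⁻¹ ^ 2 - 2 * ‖φ a‖ ^ 2 * (d:ℝ)⁻¹ else 0)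
          = (d:ℝ)⁻¹ ^ 2 - 2 * ‖φ a‖ ^ 2 * (d:ℝ)⁻¹ := by
        intro a; simp
      simp_rw [e]
      rw [Finset.sum_sub_distrib, Finset.sum_const, Finset.card_univ, Fintype.card_fin,
        nsmul_eq_mul]
      have e3 : ∑ a : Fin d, 2 * ‖φ a‖ ^ 2 * (d:ℝ)⁻¹ = 2 * (d:ℝ)⁻¹ := by
        rw [← Finset.sum_mul, ← Finset.mul_sum, hφ, mul_one]
      rw [e3]
      have hdne : (d:ℝ) ≠ 0 := hd0.ne'
      field_simp
      ring
    rw [e1, e2]; ring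
  calc ∑ i, ‖∑ a, ∑ b, φ a * (starRingEnd ℂ) (φ b) * lam i b a‖ ^ 2
      = ∑ i, ‖∑ p : Fin d × Fin d, (starRingEnd ℂ) (lam i p.1 p.2) * x p‖ ^ 2 := by
        simp_rw [hinner]
    _ ≤ 2 * ∑ p : Fin d × Fin d, ‖x p‖ ^ 2 := h
    _ = 2 * (1 - (d:ℝ)⁻¹) := by rw [hx]
    _ = 2 * ((d:ℝ) - 1) / d := by
        have hdne : (d:ℝ) ≠ 0 := hd0.ne'
        field_simp
lemma mul_conj_self (z : ℂ) : z * (starRingEnd ℂ) z = ((‖z‖ ^ 2 : ℝ) : ℂ) := by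
  rw [Complex.mul_conj]
  norm_cast
  rw [Complex.normSq_eq_norm_sq]

lemma conj_swap {m : Type*} [Fintype m] (U V : m → ℂ) :
    ∑ p, U p * (starRingEnd ℂ) (V p) = (starRingEnd ℂ) (∑ p, V p * (starRingEnd ℂ) (U p)) := by
  rw [_root_.map_sum]
  refine Finset.sum_congr rfl fun p _ => ?_
  simp only [_root_.map_mul, Complex.conj_conj]
  ring

lemma sum_factor2 {α β : Type*} [Fintype α] [Fintype β] (f : α → ℂ) (g : β → ℂ) :
    ∑ u : α, ∑ w : β, f u * g w = (∑ u, f u) * (∑ w, g w) :=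
  (Finset.sum_mul_sum Finset.univ Finset.univ f g).symm

lemma sum_factor {α β γ δ : Type*} [Fintype α] [Fintype β] [Fintype γ] [Fintype δ]
    (F : α → β → ℂ) (G : γ → δ → ℂ) :
    ∑ u : α × γ, ∑ w : β × δ, F u.1 w.1 * G u.2 w.2
      = (∑ a, ∑ b, F a b) * (∑ c, ∑ e, G c e) := by
  rw [Fintype.sum_prod_type]
  simp_rw [Fintype.sum_prod_type]
  calc ∑ a, ∑ c, ∑ b, ∑ e, F a b * G c e
      = ∑ a, ∑ b, ∑ c, ∑ e, F a b * G c e :=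
        Finset.sum_congr rfl fun a _ => Finset.sum_comm
    _ = (∑ a, ∑ b, F a b) * (∑ c, ∑ e, G c e) := by
        simp_rw [← Finset.mul_sum, ← Finset.sum_mul]

lemma orth_sum {d n : ℕ} (lam : Fin n → Matrix (Fin d) (Fin d) ℂ)
    (hherm : ∀ i, (lam i).IsHermitian)
    (horth : ∀ i j, (lam i * lam j).trace = if i = j then 2 else 0)
    (i j : Fin n) :
    ∑ a, ∑ b, (starRingEnd ℂ) (lam i a b) * lam j a b = if i = j then (2:ℂ) else 0 := by
  calc ∑ a, ∑ b, (starRingEnd ℂ) (lam i a b) * lam j a b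
      = ∑ a, ∑ b, lam j a b * lam i b a := by
        refine Finset.sum_congr rfl fun a _ => Finset.sum_congr rfl fun b _ => ?_
        rw [show (starRingEnd ℂ) (lam i a b) = lam i b a from (hherm i).apply b a]; ring
    _ = (lam j * lam i).trace := by
        simp [Matrix.trace, Matrix.mul_apply, Matrix.diag]
    _ = if i = j then 2 else 0 := by rw [horth]; simp [eq_comm]

lemma trace_sum_eq {d : ℕ} (M : Matrix (Fin d) (Fin d) ℂ) : ∑ a, M a a = M.trace := by
  simp [Matrix.trace, Matrix.diag]

lemma sum_swap4 {α β γ δ M : Type*} [Fintype α] [Fintype β] [Fintype γ] [Fintype δ]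
    [AddCommMonoid M] (f : α → β → γ → δ → M) :
    ∑ a, ∑ b, ∑ c, ∑ e, f a b c e = ∑ c, ∑ e, ∑ a, ∑ b, f a b c e := by
  calc ∑ a, ∑ b, ∑ c, ∑ e, f a b c e
      = ∑ a, ∑ c, ∑ b, ∑ e, f a b c e :=
        Finset.sum_congr rfl fun a _ => Finset.sum_comm
    _ = ∑ c, ∑ a, ∑ b, ∑ e, f a b c e := Finset.sum_comm
    _ = ∑ c, ∑ a, ∑ e, ∑ b, f a b c e :=
        Finset.sum_congr rfl fun c _ => Finset.sum_congr rfl fun a _ => Finset.sum_comm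
    _ = ∑ c, ∑ e, ∑ a, ∑ b, f a b c e :=
        Finset.sum_congr rfl fun c _ => Finset.sum_comm

lemma sum_swap3 {α β γ M : Type*} [Fintype α] [Fintype β] [Fintype γ]
    [AddCommMonoid M] (f : α → β → γ → M) :
    ∑ a, ∑ c, ∑ e, f a c e = ∑ c, ∑ e, ∑ a, f a c e := by
  calc ∑ a, ∑ c, ∑ e, f a c e
      = ∑ c, ∑ a, ∑ e, f a c e := Finset.sum_comm
    _ = ∑ c, ∑ e, ∑ a, f a c e :=
        Finset.sum_congr rfl fun c _ => Finset.sum_comm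

lemma pair_bound {d3 d4 n3 n4 : ℕ} (h3 : 1 ≤ d3) (h34 : d3 ≤ d4)
    (lam3 : Fin n3 → Matrix (Fin d3) (Fin d3) ℂ) (lam4 : Fin n4 → Matrix (Fin d4) (Fin d4) ℂ)
    (hherm3 : ∀ i, (lam3 i).IsHermitian) (hherm4 : ∀ i, (lam4 i).IsHermitian)
    (htr3 : ∀ i, (lam3 i).trace = 0) (htr4 : ∀ i, (lam4 i).trace = 0)
    (horth3 : ∀ i j, (lam3 i * lam3 j).trace = if i = j then 2 else 0)
    (horth4 : ∀ i j, (lam4 i * lam4 j).trace = if i = j then 2 else 0)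
    (ψ : Fin d3 × Fin d4 → ℂ) (hψ : ∑ y, ‖ψ y‖ ^ 2 = 1) :
    ∑ ij : Fin n3 × Fin n4, ‖∑ u : Fin d3 × Fin d4, ∑ w : Fin d3 × Fin d4,
        ψ u * (starRingEnd ℂ) (ψ w) * (lam3 ij.1 w.1 u.1 * lam4 ij.2 w.2 u.2)‖ ^ 2
      ≤ 4 * ((d3:ℝ) ^ 2 - 1) / (d3:ℝ) ^ 2 := by
  classical
  have h4 : 1 ≤ d4 := h3.trans h34
  have hd3 : (0:ℝ) < d3 := by exact_mod_cast Nat.lt_of_lt_of_le Nat.zero_lt_one h3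
  have hd4 : (0:ℝ) < d4 := by exact_mod_cast Nat.lt_of_lt_of_le Nat.zero_lt_one h4
  have hd3c : ((d3:ℝ):ℂ) ≠ 0 := by exact_mod_cast hd3.ne'
  have hd4c : ((d4:ℝ):ℂ) ≠ 0 := by exact_mod_cast hd4.ne'
  set ρ3 : Fin d3 → Fin d3 → ℂ :=
    fun a b => ∑ c, ψ (a, c) * (starRingEnd ℂ) (ψ (b, c)) with hρ3
  set ρ4 : Fin d4 → Fin d4 → ℂ :=
    fun c e => ∑ a, ψ (a, c) * (starRingEnd ℂ) (ψ (a, e)) with hρ4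
  have hρ3' : ∀ a b, ρ3 a b = ∑ c, ψ (a, c) * (starRingEnd ℂ) (ψ (b, c)) := fun a b => rfl
  have hρ4' : ∀ c e, ρ4 c e = ∑ a, ψ (a, c) * (starRingEnd ℂ) (ψ (a, e)) := fun c e => rfl
  set q : ℝ := ∑ a, ∑ b, ‖ρ3 a b‖ ^ 2 with hq
  have hψc : ∑ u : Fin d3 × Fin d4, ψ u * (starRingEnd ℂ) (ψ u) = 1 := by
    simp_rw [mul_conj_self]
    rw [← Complex.ofReal_sum, hψ, Complex.ofReal_one]
  have hconj3 : ∀ a b, (starRingEnd ℂ) (ρ3 a b) = ρ3 b a := by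
    intro a b
    rw [hρ3' a b, hρ3' b a, _root_.map_sum]
    exact Finset.sum_congr rfl fun c _ => by
      simp only [_root_.map_mul, Complex.conj_conj]; ring
  have hconj4 : ∀ c e, (starRingEnd ℂ) (ρ4 c e) = ρ4 e c := by
    intro c e
    rw [hρ4' c e, hρ4' e c, _root_.map_sum]
    exact Finset.sum_congr rfl fun a _ => by
      simp only [_root_.map_mul, Complex.conj_conj]; ring
  have htr3c : ∑ a, ρ3 a a = 1 := by
    calc ∑ a, ρ3 a a = ∑ a, ∑ c, ψ (a, c) * (starRingEnd ℂ) (ψ (a, c)) :=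
          Finset.sum_congr rfl fun a _ => hρ3' a a
      _ = ∑ u : Fin d3 × Fin d4, ψ u * (starRingEnd ℂ) (ψ u) :=
          (Fintype.sum_prod_type (f := fun u : Fin d3 × Fin d4 => ψ u * (starRingEnd ℂ) (ψ u))).symm
      _ = 1 := hψc
  have htr4c : ∑ c, ρ4 c c = 1 := by
    calc ∑ c, ρ4 c c = ∑ c, ∑ a, ψ (a, c) * (starRingEnd ℂ) (ψ (a, c)) :=
          Finset.sum_congr rfl fun c _ => hρ4' c c
      _ = ∑ a, ∑ c, ψ (a, c) * (starRingEnd ℂ) (ψ (a, c)) := Finset.sum_comm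
      _ = ∑ u : Fin d3 × Fin d4, ψ u * (starRingEnd ℂ) (ψ u) :=
          (Fintype.sum_prod_type (f := fun u : Fin d3 × Fin d4 => ψ u * (starRingEnd ℂ) (ψ u))).symm
      _ = 1 := hψc
  have hq3c : ∑ a, ∑ b, ρ3 a b * (starRingEnd ℂ) (ρ3 a b) = ((q : ℝ) : ℂ) := by
    simp_rw [mul_conj_self]
    rw [hq]
    push_cast
    rfl
  have hq4c : ∑ c, ∑ e, ρ4 c e * (starRingEnd ℂ) (ρ4 c e) = ((q : ℝ) : ℂ) := by
    rw [← hq3c]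
    calc ∑ c, ∑ e, ρ4 c e * (starRingEnd ℂ) (ρ4 c e)
        = ∑ c, ∑ e, ∑ a, ∑ b,
            (ψ (a, c) * (starRingEnd ℂ) (ψ (a, e))) * (ψ (b, e) * (starRingEnd ℂ) (ψ (b, c))) := by
          refine Finset.sum_congr rfl fun c _ => Finset.sum_congr rfl fun e _ => ?_
          rw [hconj4, hρ4' c e, hρ4' e c, Finset.sum_mul_sum]
      _ = ∑ a, ∑ b, ∑ c, ∑ e,
            (ψ (a, c) * (starRingEnd ℂ) (ψ (a, e))) * (ψ (b, e) * (starRingEnd ℂ) (ψ (b, c))) :=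
          (sum_swap4 _).symm
      _ = ∑ a, ∑ b, ρ3 a b * (starRingEnd ℂ) (ρ3 a b) := by
          refine Finset.sum_congr rfl fun a _ => Finset.sum_congr rfl fun b _ => ?_
          rw [hconj3, hρ3' a b, hρ3' b a, Finset.sum_mul_sum]
          refine Finset.sum_congr rfl fun c _ => Finset.sum_congr rfl fun e _ => ?_
          ring
  have hqge : (d3:ℝ)⁻¹ ≤ q := by
    have hdiag3 : ∀ a, ρ3 a a = ((∑ c, ‖ψ (a, c)‖ ^ 2 : ℝ) : ℂ) := by
      intro a
      rw [hρ3' a a]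
      simp_rw [mul_conj_self]
      rw [← Complex.ofReal_sum]
    set r : Fin d3 → ℝ := fun a => ∑ c, ‖ψ (a, c)‖ ^ 2 with hrdef
    have hr1 : ∑ a, r a = 1 := by
      rw [Fintype.sum_prod_type] at hψ
      exact hψ
    have hsq : (1:ℝ) ≤ (d3:ℝ) * ∑ a, (r a) ^ 2 := by
      have h := sq_sum_le_card_mul_sum_sq (s := (Finset.univ : Finset (Fin d3))) (f := r)
      rw [hr1] at h
      simpa using h
    have hdiagle : ∑ a, (r a) ^ 2 ≤ q := by
      rw [hq]
      refine Finset.sum_le_sum fun a _ => ?_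
      have hra : (r a) ^ 2 = ‖ρ3 a a‖ ^ 2 := by
        rw [hdiag3 a, Complex.norm_real, Real.norm_eq_abs, sq_abs]
      rw [hra]
      exact Finset.single_le_sum (f := fun b => ‖ρ3 a b‖ ^ 2)
        (fun b _ => by positivity) (Finset.mem_univ a)
    rw [inv_eq_one_div, div_le_iff₀ hd3]
    nlinarith [mul_le_mul_of_nonneg_left hdiagle hd3.le]
  set A : Fin d3 × Fin d4 → Fin d3 × Fin d4 → ℂ :=
    fun u w => ψ u * (starRingEnd ℂ) (ψ w) with hA
  set B : Fin d3 × Fin d4 → Fin d3 × Fin d4 → ℂ :=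
    fun u w => ρ3 u.1 w.1 * (if u.2 = w.2 then ((d4:ℝ)⁻¹ : ℂ) else 0) with hB
  set Cc : Fin d3 × Fin d4 → Fin d3 × Fin d4 → ℂ :=
    fun u w => (if u.1 = w.1 then ((d3:ℝ)⁻¹ : ℂ) else 0) * ρ4 u.2 w.2 with hC
  set Dd : Fin d3 × Fin d4 → Fin d3 × Fin d4 → ℂ :=
    fun u w => (if u.1 = w.1 then ((d3:ℝ)⁻¹ : ℂ) else 0) *
      (if u.2 = w.2 then ((d4:ℝ)⁻¹ : ℂ) else 0) with hD
  set X : (Fin d3 × Fin d4) × (Fin d3 × Fin d4) → ℂ :=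
    fun m => A m.1 m.2 - B m.1 m.2 - Cc m.1 m.2 + Dd m.1 m.2 with hX
  set v : Fin n3 × Fin n4 → (Fin d3 × Fin d4) × (Fin d3 × Fin d4) → ℂ :=
    fun ij m => lam3 ij.1 m.1.1 m.2.1 * lam4 ij.2 m.1.2 m.2.2 with hvdef
  have hv : ∀ ij kl : Fin n3 × Fin n4,
      ∑ m, (starRingEnd ℂ) (v ij m) * v kl m = if ij = kl then (4:ℂ) else 0 := by
    intro ij kl
    calc ∑ m, (starRingEnd ℂ) (v ij m) * v kl m
        = ∑ u : Fin d3 × Fin d4, ∑ w : Fin d3 × Fin d4,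
            ((starRingEnd ℂ) (lam3 ij.1 u.1 w.1) * lam3 kl.1 u.1 w.1) *
              ((starRingEnd ℂ) (lam4 ij.2 u.2 w.2) * lam4 kl.2 u.2 w.2) := by
          rw [Fintype.sum_prod_type]
          refine Finset.sum_congr rfl fun u _ => Finset.sum_congr rfl fun w _ => ?_
          simp only [hvdef, _root_.map_mul]
          ring
      _ = (∑ a, ∑ b, (starRingEnd ℂ) (lam3 ij.1 a b) * lam3 kl.1 a b) *
            (∑ c, ∑ e, (starRingEnd ℂ) (lam4 ij.2 c e) * lam4 kl.2 c e) :=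
          sum_factor (fun a b => (starRingEnd ℂ) (lam3 ij.1 a b) * lam3 kl.1 a b)
            (fun c e => (starRingEnd ℂ) (lam4 ij.2 c e) * lam4 kl.2 c e)
      _ = (if ij.1 = kl.1 then (2:ℂ) else 0) * (if ij.2 = kl.2 then (2:ℂ) else 0) := by
          rw [orth_sum lam3 hherm3 horth3, orth_sum lam4 hherm4 horth4]
      _ = if ij = kl then 4 else 0 := by
          by_cases h1 : ij.1 = kl.1 <;> by_cases h2 : ij.2 = kl.2 <;>
            simp [Prod.ext_iff, h1, h2] <;> norm_num
  have hbes := bessel_scaled 4 (by norm_num) v hv X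
  have hinner : ∀ ij : Fin n3 × Fin n4,
      ∑ m, (starRingEnd ℂ) (v ij m) * X m
        = ∑ u : Fin d3 × Fin d4, ∑ w : Fin d3 × Fin d4,
            ψ u * (starRingEnd ℂ) (ψ w) * (lam3 ij.1 w.1 u.1 * lam4 ij.2 w.2 u.2) := by
    intro ij
    have hc3 : ∀ a b, (starRingEnd ℂ) (lam3 ij.1 a b) = lam3 ij.1 b a :=
      fun a b => (hherm3 ij.1).apply b a
    have hc4 : ∀ c e, (starRingEnd ℂ) (lam4 ij.2 c e) = lam4 ij.2 e c :=
      fun c e => (hherm4 ij.2).apply e c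
    have expand : ∀ m : (Fin d3 × Fin d4) × (Fin d3 × Fin d4),
        (starRingEnd ℂ) (v ij m) * X m
          = ψ m.1 * (starRingEnd ℂ) (ψ m.2) * (lam3 ij.1 m.2.1 m.1.1 * lam4 ij.2 m.2.2 m.1.2)
            - (lam3 ij.1 m.2.1 m.1.1 * ρ3 m.1.1 m.2.1) *
                (lam4 ij.2 m.2.2 m.1.2 * (if m.1.2 = m.2.2 then ((d4:ℝ)⁻¹ : ℂ) else 0))
            - (lam3 ij.1 m.2.1 m.1.1 * (if m.1.1 = m.2.1 then ((d3:ℝ)⁻¹ : ℂ) else 0)) *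
                (lam4 ij.2 m.2.2 m.1.2 * ρ4 m.1.2 m.2.2)
            + (lam3 ij.1 m.2.1 m.1.1 * (if m.1.1 = m.2.1 then ((d3:ℝ)⁻¹ : ℂ) else 0)) *
                (lam4 ij.2 m.2.2 m.1.2 * (if m.1.2 = m.2.2 then ((d4:ℝ)⁻¹ : ℂ) else 0)) := by
      intro m
      simp only [hX, hA, hB, hC, hD, hvdef, _root_.map_mul, hc3, hc4]
      ring
    rw [Finset.sum_congr rfl fun m _ => expand m]
    rw [Finset.sum_add_distrib, Finset.sum_sub_distrib, Finset.sum_sub_distrib]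
    have z2 : ∑ m : (Fin d3 × Fin d4) × (Fin d3 × Fin d4),
        (lam3 ij.1 m.2.1 m.1.1 * ρ3 m.1.1 m.2.1) *
          (lam4 ij.2 m.2.2 m.1.2 * (if m.1.2 = m.2.2 then ((d4:ℝ)⁻¹ : ℂ) else 0)) = 0 := by
      rw [Fintype.sum_prod_type]
      rw [sum_factor (fun a b => lam3 ij.1 b a * ρ3 a b)
        (fun c e => lam4 ij.2 e c * (if c = e then ((d4:ℝ)⁻¹ : ℂ) else 0))]
      have hz : (∑ c, ∑ e, lam4 ij.2 e c * (if c = e then ((d4:ℝ)⁻¹ : ℂ) else 0)) = 0 := by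
        simp only [mul_ite, mul_zero, Finset.sum_ite_eq, Finset.mem_univ, if_true]
        rw [← Finset.sum_mul, trace_sum_eq, htr4, zero_mul]
      rw [hz, mul_zero]
    have z3 : ∑ m : (Fin d3 × Fin d4) × (Fin d3 × Fin d4),
        (lam3 ij.1 m.2.1 m.1.1 * (if m.1.1 = m.2.1 then ((d3:ℝ)⁻¹ : ℂ) else 0)) *
          (lam4 ij.2 m.2.2 m.1.2 * ρ4 m.1.2 m.2.2) = 0 := by
      rw [Fintype.sum_prod_type]
      rw [sum_factor (fun a b => lam3 ij.1 b a * (if a = b then ((d3:ℝ)⁻¹ : ℂ) else 0))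
        (fun c e => lam4 ij.2 e c * ρ4 c e)]
      have hz : (∑ a, ∑ b, lam3 ij.1 b a * (if a = b then ((d3:ℝ)⁻¹ : ℂ) else 0)) = 0 := by
        simp only [mul_ite, mul_zero, Finset.sum_ite_eq, Finset.mem_univ, if_true]
        rw [← Finset.sum_mul, trace_sum_eq, htr3, zero_mul]
      rw [hz, zero_mul]
    have z4 : ∑ m : (Fin d3 × Fin d4) × (Fin d3 × Fin d4),
        (lam3 ij.1 m.2.1 m.1.1 * (if m.1.1 = m.2.1 then ((d3:ℝ)⁻¹ : ℂ) else 0)) *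
          (lam4 ij.2 m.2.2 m.1.2 * (if m.1.2 = m.2.2 then ((d4:ℝ)⁻¹ : ℂ) else 0)) = 0 := by
      rw [Fintype.sum_prod_type]
      rw [sum_factor (fun a b => lam3 ij.1 b a * (if a = b then ((d3:ℝ)⁻¹ : ℂ) else 0))
        (fun c e => lam4 ij.2 e c * (if c = e then ((d4:ℝ)⁻¹ : ℂ) else 0))]
      have hz : (∑ a, ∑ b, lam3 ij.1 b a * (if a = b then ((d3:ℝ)⁻¹ : ℂ) else 0)) = 0 := by
        simp only [mul_ite, mul_zero, Finset.sum_ite_eq, Finset.mem_univ, if_true]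
        rw [← Finset.sum_mul, trace_sum_eq, htr3, zero_mul]
      rw [hz, zero_mul]
    rw [z2, z3, z4, sub_zero, sub_zero, add_zero]
    exact Fintype.sum_prod_type
      (f := fun m : (Fin d3 × Fin d4) × (Fin d3 × Fin d4) =>
        ψ m.1 * (starRingEnd ℂ) (ψ m.2) * (lam3 ij.1 m.2.1 m.1.1 * lam4 ij.2 m.2.2 m.1.2))
  have hψc2 : ∑ u : Fin d3 × Fin d4, (starRingEnd ℂ) (ψ u) * ψ u = 1 := by
    rw [← hψc]
    exact Finset.sum_congr rfl fun u _ => by ring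
  have hFq3 : ∑ a, ∑ b, ρ3 a b * ρ3 b a = ((q:ℝ):ℂ) := by
    rw [← hq3c]
    refine Finset.sum_congr rfl fun a _ => Finset.sum_congr rfl fun b _ => ?_
    rw [hconj3]
  have hFq4 : ∑ c, ∑ e, ρ4 c e * ρ4 e c = ((q:ℝ):ℂ) := by
    rw [← hq4c]
    refine Finset.sum_congr rfl fun c _ => Finset.sum_congr rfl fun e _ => ?_
    rw [hconj4]
  have hF1 : ∑ a, ∑ b, ρ3 a b * (if a = b then ((d3:ℝ)⁻¹:ℂ) else 0) = ((d3:ℝ)⁻¹:ℂ) := by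
    simp only [mul_ite, mul_zero, Finset.sum_ite_eq, Finset.mem_univ, if_true]
    rw [← Finset.sum_mul, htr3c, one_mul]
  have hF2 : ∑ c, ∑ e, (if c = e then ((d4:ℝ)⁻¹:ℂ) else 0) * ρ4 e c = ((d4:ℝ)⁻¹:ℂ) := by
    simp only [ite_mul, zero_mul, Finset.sum_ite_eq, Finset.mem_univ, if_true]
    rw [← Finset.mul_sum, htr4c, mul_one]
  have hF3 : ∑ c, ∑ e, ρ4 c e * (if c = e then ((d4:ℝ)⁻¹:ℂ) else 0) = ((d4:ℝ)⁻¹:ℂ) := by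
    simp only [mul_ite, mul_zero, Finset.sum_ite_eq, Finset.mem_univ, if_true]
    rw [← Finset.sum_mul, htr4c, one_mul]
  have hI3 : ∑ a : Fin d3, ∑ b : Fin d3, (if a = b then ((d3:ℝ)⁻¹:ℂ) else 0) * (if a = b then ((d3:ℝ)⁻¹:ℂ) else 0)
      = ((d3:ℝ)⁻¹:ℂ) := by
    have e : ∀ a b : Fin d3,
        (if a = b then ((d3:ℝ)⁻¹:ℂ) else 0) * (if a = b then ((d3:ℝ)⁻¹:ℂ) else 0)
          = if a = b then ((d3:ℝ)⁻¹:ℂ) * ((d3:ℝ)⁻¹:ℂ) else 0 := by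
      intro a b; split <;> simp
    simp_rw [e]
    simp only [Finset.sum_ite_eq, Finset.mem_univ, if_true, Finset.sum_const,
      Finset.card_univ, Fintype.card_fin, nsmul_eq_mul]
    push_cast
    field_simp
  have hI4 : ∑ c : Fin d4, ∑ e : Fin d4, (if c = e then ((d4:ℝ)⁻¹:ℂ) else 0) * (if c = e then ((d4:ℝ)⁻¹:ℂ) else 0)
      = ((d4:ℝ)⁻¹:ℂ) := by
    have e : ∀ c e : Fin d4,
        (if c = e then ((d4:ℝ)⁻¹:ℂ) else 0) * (if c = e then ((d4:ℝ)⁻¹:ℂ) else 0)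
          = if c = e then ((d4:ℝ)⁻¹:ℂ) * ((d4:ℝ)⁻¹:ℂ) else 0 := by
      intro c e; split <;> simp
    simp_rw [e]
    simp only [Finset.sum_ite_eq, Finset.mem_univ, if_true, Finset.sum_const,
      Finset.card_univ, Fintype.card_fin, nsmul_eq_mul]
    push_cast
    field_simp
  have hps : ∑ a, ∑ c, ψ (a, c) * (starRingEnd ℂ) (ψ (a, c)) = 1 := by
    rw [← hψc]
    exact (Fintype.sum_prod_type
      (f := fun u : Fin d3 × Fin d4 => ψ u * (starRingEnd ℂ) (ψ u))).symm
  have SAA : ∑ m : (Fin d3 × Fin d4) × (Fin d3 × Fin d4),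
      A m.1 m.2 * (starRingEnd ℂ) (A m.1 m.2) = 1 := by
    calc ∑ m : (Fin d3 × Fin d4) × (Fin d3 × Fin d4), A m.1 m.2 * (starRingEnd ℂ) (A m.1 m.2)
        = ∑ u : Fin d3 × Fin d4, ∑ w : Fin d3 × Fin d4,
            (ψ u * (starRingEnd ℂ) (ψ u)) * ((starRingEnd ℂ) (ψ w) * ψ w) := by
          rw [Fintype.sum_prod_type]
          refine Finset.sum_congr rfl fun u _ => Finset.sum_congr rfl fun w _ => ?_
          simp only [hA, _root_.map_mul, Complex.conj_conj]
          ring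
      _ = (∑ u, ψ u * (starRingEnd ℂ) (ψ u)) * (∑ w, (starRingEnd ℂ) (ψ w) * ψ w) :=
          sum_factor2 (fun u => ψ u * (starRingEnd ℂ) (ψ u))
            (fun w => (starRingEnd ℂ) (ψ w) * ψ w)
      _ = 1 := by rw [hψc, hψc2, one_mul]
  have SAB : ∑ m : (Fin d3 × Fin d4) × (Fin d3 × Fin d4),
      A m.1 m.2 * (starRingEnd ℂ) (B m.1 m.2) = ((q:ℝ):ℂ) * ((d4:ℝ)⁻¹:ℂ) := by
    calc ∑ m : (Fin d3 × Fin d4) × (Fin d3 × Fin d4), A m.1 m.2 * (starRingEnd ℂ) (B m.1 m.2)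
        = ∑ a, ∑ c, ∑ b, ∑ e, (ψ (a,c) * (starRingEnd ℂ) (ψ (b,e)) * ρ3 b a) *
            (if c = e then ((d4:ℝ)⁻¹:ℂ) else 0) := by
          simp only [Fintype.sum_prod_type]
          refine Finset.sum_congr rfl fun a _ => Finset.sum_congr rfl fun c _ =>
            Finset.sum_congr rfl fun b _ => Finset.sum_congr rfl fun e _ => ?_
          simp only [hA, hB, _root_.map_mul, apply_ite (starRingEnd ℂ), _root_.map_inv₀, Complex.conj_ofReal,
            _root_.map_zero, hconj3]
          ring
      _ = ∑ a, ∑ c, ∑ b, ψ (a,c) * (starRingEnd ℂ) (ψ (b,c)) * ρ3 b a * ((d4:ℝ)⁻¹:ℂ) := by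
          refine Finset.sum_congr rfl fun a _ => Finset.sum_congr rfl fun c _ =>
            Finset.sum_congr rfl fun b _ => ?_
          simp only [mul_ite, mul_zero, Finset.sum_ite_eq, Finset.mem_univ, if_true]
      _ = ∑ a, ∑ b, ∑ c, ψ (a,c) * (starRingEnd ℂ) (ψ (b,c)) * ρ3 b a * ((d4:ℝ)⁻¹:ℂ) :=
          Finset.sum_congr rfl fun a _ => Finset.sum_comm
      _ = ∑ a, ∑ b, ρ3 a b * ρ3 b a * ((d4:ℝ)⁻¹:ℂ) := by
          refine Finset.sum_congr rfl fun a _ => Finset.sum_congr rfl fun b _ => ?_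
          rw [hρ3' a b, Finset.sum_mul, Finset.sum_mul]
      _ = ((q:ℝ):ℂ) * ((d4:ℝ)⁻¹:ℂ) := by
          simp_rw [← Finset.sum_mul]
          rw [hFq3]
  have SAC : ∑ m : (Fin d3 × Fin d4) × (Fin d3 × Fin d4),
      A m.1 m.2 * (starRingEnd ℂ) (Cc m.1 m.2) = ((q:ℝ):ℂ) * ((d3:ℝ)⁻¹:ℂ) := by
    calc ∑ m : (Fin d3 × Fin d4) × (Fin d3 × Fin d4), A m.1 m.2 * (starRingEnd ℂ) (Cc m.1 m.2)
        = ∑ a, ∑ c, ∑ b, ∑ e, (if a = b then ((d3:ℝ)⁻¹:ℂ) else 0) *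
            (ψ (a,c) * (starRingEnd ℂ) (ψ (b,e)) * ρ4 e c) := by
          simp only [Fintype.sum_prod_type]
          refine Finset.sum_congr rfl fun a _ => Finset.sum_congr rfl fun c _ =>
            Finset.sum_congr rfl fun b _ => Finset.sum_congr rfl fun e _ => ?_
          simp only [hA, hC, _root_.map_mul, apply_ite (starRingEnd ℂ), _root_.map_inv₀, Complex.conj_ofReal,
            _root_.map_zero, hconj4]
          ring
      _ = ∑ a, ∑ c, ∑ e, ∑ b, (if a = b then ((d3:ℝ)⁻¹:ℂ) else 0) *
            (ψ (a,c) * (starRingEnd ℂ) (ψ (b,e)) * ρ4 e c) :=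
          Finset.sum_congr rfl fun a _ => Finset.sum_congr rfl fun c _ => Finset.sum_comm
      _ = ∑ a, ∑ c, ∑ e, ((d3:ℝ)⁻¹:ℂ) * (ψ (a,c) * (starRingEnd ℂ) (ψ (a,e)) * ρ4 e c) := by
          refine Finset.sum_congr rfl fun a _ => Finset.sum_congr rfl fun c _ =>
            Finset.sum_congr rfl fun e _ => ?_
          simp only [ite_mul, zero_mul, Finset.sum_ite_eq, Finset.mem_univ, if_true]
      _ = ∑ c, ∑ e, ∑ a, ((d3:ℝ)⁻¹:ℂ) * (ψ (a,c) * (starRingEnd ℂ) (ψ (a,e)) * ρ4 e c) :=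
          sum_swap3 _
      _ = ∑ c, ∑ e, ((d3:ℝ)⁻¹:ℂ) * (ρ4 c e * ρ4 e c) := by
          refine Finset.sum_congr rfl fun c _ => Finset.sum_congr rfl fun e _ => ?_
          rw [hρ4' c e, Finset.sum_mul, Finset.mul_sum]
      _ = ((q:ℝ):ℂ) * ((d3:ℝ)⁻¹:ℂ) := by
          simp_rw [← Finset.mul_sum]
          rw [hFq4, mul_comm]
  have SAD : ∑ m : (Fin d3 × Fin d4) × (Fin d3 × Fin d4),
      A m.1 m.2 * (starRingEnd ℂ) (Dd m.1 m.2) = ((d3:ℝ)⁻¹:ℂ) * ((d4:ℝ)⁻¹:ℂ) := by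
    calc ∑ m : (Fin d3 × Fin d4) × (Fin d3 × Fin d4), A m.1 m.2 * (starRingEnd ℂ) (Dd m.1 m.2)
        = ∑ a, ∑ c, ∑ b, ∑ e, (if a = b then ((d3:ℝ)⁻¹:ℂ) else 0) *
            ((if c = e then ((d4:ℝ)⁻¹:ℂ) else 0) * (ψ (a,c) * (starRingEnd ℂ) (ψ (b,e)))) := by
          simp only [Fintype.sum_prod_type]
          refine Finset.sum_congr rfl fun a _ => Finset.sum_congr rfl fun c _ =>
            Finset.sum_congr rfl fun b _ => Finset.sum_congr rfl fun e _ => ?_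
          simp only [hA, hD, _root_.map_mul, apply_ite (starRingEnd ℂ), _root_.map_inv₀, Complex.conj_ofReal,
            _root_.map_zero]
          ring
      _ = ∑ a, ∑ c, ∑ e, ∑ b, (if a = b then ((d3:ℝ)⁻¹:ℂ) else 0) *
            ((if c = e then ((d4:ℝ)⁻¹:ℂ) else 0) * (ψ (a,c) * (starRingEnd ℂ) (ψ (b,e)))) :=
          Finset.sum_congr rfl fun a _ => Finset.sum_congr rfl fun c _ => Finset.sum_comm
      _ = ∑ a, ∑ c, ∑ e, ((d3:ℝ)⁻¹:ℂ) *
            ((if c = e then ((d4:ℝ)⁻¹:ℂ) else 0) * (ψ (a,c) * (starRingEnd ℂ) (ψ (a,e)))) := by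
          refine Finset.sum_congr rfl fun a _ => Finset.sum_congr rfl fun c _ =>
            Finset.sum_congr rfl fun e _ => ?_
          simp only [ite_mul, zero_mul, Finset.sum_ite_eq, Finset.mem_univ, if_true]
      _ = ∑ a, ∑ c, ((d3:ℝ)⁻¹:ℂ) * (((d4:ℝ)⁻¹:ℂ) * (ψ (a,c) * (starRingEnd ℂ) (ψ (a,c)))) := by
          refine Finset.sum_congr rfl fun a _ => Finset.sum_congr rfl fun c _ => ?_
          simp only [ite_mul, zero_mul, mul_ite, mul_zero, Finset.sum_ite_eq,
            Finset.mem_univ, if_true]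
      _ = ∑ a, ∑ c, ((d3:ℝ)⁻¹:ℂ) * ((d4:ℝ)⁻¹:ℂ) * (ψ (a,c) * (starRingEnd ℂ) (ψ (a,c))) := by
          refine Finset.sum_congr rfl fun a _ => Finset.sum_congr rfl fun c _ => ?_
          ring
      _ = ((d3:ℝ)⁻¹:ℂ) * ((d4:ℝ)⁻¹:ℂ) := by
          simp_rw [← Finset.mul_sum]
          rw [hps, mul_one]
  have SBB : ∑ m : (Fin d3 × Fin d4) × (Fin d3 × Fin d4),
      B m.1 m.2 * (starRingEnd ℂ) (B m.1 m.2) = ((q:ℝ):ℂ) * ((d4:ℝ)⁻¹:ℂ) := by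
    calc ∑ m : (Fin d3 × Fin d4) × (Fin d3 × Fin d4), B m.1 m.2 * (starRingEnd ℂ) (B m.1 m.2)
        = ∑ u : Fin d3 × Fin d4, ∑ w : Fin d3 × Fin d4, (ρ3 u.1 w.1 * ρ3 w.1 u.1) *
            ((if u.2 = w.2 then ((d4:ℝ)⁻¹:ℂ) else 0) * (if u.2 = w.2 then ((d4:ℝ)⁻¹:ℂ) else 0)) := by
          rw [Fintype.sum_prod_type]
          refine Finset.sum_congr rfl fun u _ => Finset.sum_congr rfl fun w _ => ?_
          simp only [hB, _root_.map_mul, apply_ite (starRingEnd ℂ), _root_.map_inv₀, Complex.conj_ofReal,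
            _root_.map_zero, hconj3]
          ring
      _ = (∑ a, ∑ b, ρ3 a b * ρ3 b a) * (∑ c : Fin d4, ∑ e : Fin d4,
            (if c = e then ((d4:ℝ)⁻¹:ℂ) else 0) * (if c = e then ((d4:ℝ)⁻¹:ℂ) else 0)) :=
          sum_factor (fun a b => ρ3 a b * ρ3 b a)
            (fun c e => (if c = e then ((d4:ℝ)⁻¹:ℂ) else 0) * (if c = e then ((d4:ℝ)⁻¹:ℂ) else 0))
      _ = ((q:ℝ):ℂ) * ((d4:ℝ)⁻¹:ℂ) := by rw [hFq3, hI4]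
  have SBC : ∑ m : (Fin d3 × Fin d4) × (Fin d3 × Fin d4),
      B m.1 m.2 * (starRingEnd ℂ) (Cc m.1 m.2) = ((d3:ℝ)⁻¹:ℂ) * ((d4:ℝ)⁻¹:ℂ) := by
    calc ∑ m : (Fin d3 × Fin d4) × (Fin d3 × Fin d4), B m.1 m.2 * (starRingEnd ℂ) (Cc m.1 m.2)
        = ∑ u : Fin d3 × Fin d4, ∑ w : Fin d3 × Fin d4,
            (ρ3 u.1 w.1 * (if u.1 = w.1 then ((d3:ℝ)⁻¹:ℂ) else 0)) *
            ((if u.2 = w.2 then ((d4:ℝ)⁻¹:ℂ) else 0) * ρ4 w.2 u.2) := by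
          rw [Fintype.sum_prod_type]
          refine Finset.sum_congr rfl fun u _ => Finset.sum_congr rfl fun w _ => ?_
          simp only [hB, hC, _root_.map_mul, apply_ite (starRingEnd ℂ), _root_.map_inv₀, Complex.conj_ofReal,
            _root_.map_zero, hconj4]
          ring
      _ = (∑ a, ∑ b, ρ3 a b * (if a = b then ((d3:ℝ)⁻¹:ℂ) else 0)) *
            (∑ c, ∑ e, (if c = e then ((d4:ℝ)⁻¹:ℂ) else 0) * ρ4 e c) :=
          sum_factor (fun a b => ρ3 a b * (if a = b then ((d3:ℝ)⁻¹:ℂ) else 0))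
            (fun c e => (if c = e then ((d4:ℝ)⁻¹:ℂ) else 0) * ρ4 e c)
      _ = ((d3:ℝ)⁻¹:ℂ) * ((d4:ℝ)⁻¹:ℂ) := by rw [hF1, hF2]
  have SBD : ∑ m : (Fin d3 × Fin d4) × (Fin d3 × Fin d4),
      B m.1 m.2 * (starRingEnd ℂ) (Dd m.1 m.2) = ((d3:ℝ)⁻¹:ℂ) * ((d4:ℝ)⁻¹:ℂ) := by
    calc ∑ m : (Fin d3 × Fin d4) × (Fin d3 × Fin d4), B m.1 m.2 * (starRingEnd ℂ) (Dd m.1 m.2)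
        = ∑ u : Fin d3 × Fin d4, ∑ w : Fin d3 × Fin d4,
            (ρ3 u.1 w.1 * (if u.1 = w.1 then ((d3:ℝ)⁻¹:ℂ) else 0)) *
            ((if u.2 = w.2 then ((d4:ℝ)⁻¹:ℂ) else 0) * (if u.2 = w.2 then ((d4:ℝ)⁻¹:ℂ) else 0)) := by
          rw [Fintype.sum_prod_type]
          refine Finset.sum_congr rfl fun u _ => Finset.sum_congr rfl fun w _ => ?_
          simp only [hB, hD, _root_.map_mul, apply_ite (starRingEnd ℂ), _root_.map_inv₀, Complex.conj_ofReal,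
            _root_.map_zero]
          ring
      _ = (∑ a, ∑ b, ρ3 a b * (if a = b then ((d3:ℝ)⁻¹:ℂ) else 0)) *
            (∑ c : Fin d4, ∑ e : Fin d4,
              (if c = e then ((d4:ℝ)⁻¹:ℂ) else 0) * (if c = e then ((d4:ℝ)⁻¹:ℂ) else 0)) :=
          sum_factor (fun a b => ρ3 a b * (if a = b then ((d3:ℝ)⁻¹:ℂ) else 0))
            (fun c e => (if c = e then ((d4:ℝ)⁻¹:ℂ) else 0) * (if c = e then ((d4:ℝ)⁻¹:ℂ) else 0))
      _ = ((d3:ℝ)⁻¹:ℂ) * ((d4:ℝ)⁻¹:ℂ) := by rw [hF1, hI4]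
  have SCC : ∑ m : (Fin d3 × Fin d4) × (Fin d3 × Fin d4),
      Cc m.1 m.2 * (starRingEnd ℂ) (Cc m.1 m.2) = ((d3:ℝ)⁻¹:ℂ) * ((q:ℝ):ℂ) := by
    calc ∑ m : (Fin d3 × Fin d4) × (Fin d3 × Fin d4), Cc m.1 m.2 * (starRingEnd ℂ) (Cc m.1 m.2)
        = ∑ u : Fin d3 × Fin d4, ∑ w : Fin d3 × Fin d4,
            ((if u.1 = w.1 then ((d3:ℝ)⁻¹:ℂ) else 0) * (if u.1 = w.1 then ((d3:ℝ)⁻¹:ℂ) else 0)) *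
            (ρ4 u.2 w.2 * ρ4 w.2 u.2) := by
          rw [Fintype.sum_prod_type]
          refine Finset.sum_congr rfl fun u _ => Finset.sum_congr rfl fun w _ => ?_
          simp only [hC, _root_.map_mul, apply_ite (starRingEnd ℂ), _root_.map_inv₀, Complex.conj_ofReal,
            _root_.map_zero, hconj4]
          ring
      _ = (∑ a : Fin d3, ∑ b : Fin d3,
            (if a = b then ((d3:ℝ)⁻¹:ℂ) else 0) * (if a = b then ((d3:ℝ)⁻¹:ℂ) else 0)) *
            (∑ c, ∑ e, ρ4 c e * ρ4 e c) :=
          sum_factor (fun a b => (if a = b then ((d3:ℝ)⁻¹:ℂ) else 0) * (if a = b then ((d3:ℝ)⁻¹:ℂ) else 0))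
            (fun c e => ρ4 c e * ρ4 e c)
      _ = ((d3:ℝ)⁻¹:ℂ) * ((q:ℝ):ℂ) := by rw [hI3, hFq4]
  have SCD : ∑ m : (Fin d3 × Fin d4) × (Fin d3 × Fin d4),
      Cc m.1 m.2 * (starRingEnd ℂ) (Dd m.1 m.2) = ((d3:ℝ)⁻¹:ℂ) * ((d4:ℝ)⁻¹:ℂ) := by
    calc ∑ m : (Fin d3 × Fin d4) × (Fin d3 × Fin d4), Cc m.1 m.2 * (starRingEnd ℂ) (Dd m.1 m.2)
        = ∑ u : Fin d3 × Fin d4, ∑ w : Fin d3 × Fin d4,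
            ((if u.1 = w.1 then ((d3:ℝ)⁻¹:ℂ) else 0) * (if u.1 = w.1 then ((d3:ℝ)⁻¹:ℂ) else 0)) *
            (ρ4 u.2 w.2 * (if u.2 = w.2 then ((d4:ℝ)⁻¹:ℂ) else 0)) := by
          rw [Fintype.sum_prod_type]
          refine Finset.sum_congr rfl fun u _ => Finset.sum_congr rfl fun w _ => ?_
          simp only [hC, hD, _root_.map_mul, apply_ite (starRingEnd ℂ), _root_.map_inv₀, Complex.conj_ofReal,
            _root_.map_zero]
          ring
      _ = (∑ a : Fin d3, ∑ b : Fin d3,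
            (if a = b then ((d3:ℝ)⁻¹:ℂ) else 0) * (if a = b then ((d3:ℝ)⁻¹:ℂ) else 0)) *
            (∑ c, ∑ e, ρ4 c e * (if c = e then ((d4:ℝ)⁻¹:ℂ) else 0)) :=
          sum_factor (fun a b => (if a = b then ((d3:ℝ)⁻¹:ℂ) else 0) * (if a = b then ((d3:ℝ)⁻¹:ℂ) else 0))
            (fun c e => ρ4 c e * (if c = e then ((d4:ℝ)⁻¹:ℂ) else 0))
      _ = ((d3:ℝ)⁻¹:ℂ) * ((d4:ℝ)⁻¹:ℂ) := by rw [hI3, hF3]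
  have SDD : ∑ m : (Fin d3 × Fin d4) × (Fin d3 × Fin d4),
      Dd m.1 m.2 * (starRingEnd ℂ) (Dd m.1 m.2) = ((d3:ℝ)⁻¹:ℂ) * ((d4:ℝ)⁻¹:ℂ) := by
    calc ∑ m : (Fin d3 × Fin d4) × (Fin d3 × Fin d4), Dd m.1 m.2 * (starRingEnd ℂ) (Dd m.1 m.2)
        = ∑ u : Fin d3 × Fin d4, ∑ w : Fin d3 × Fin d4,
            ((if u.1 = w.1 then ((d3:ℝ)⁻¹:ℂ) else 0) * (if u.1 = w.1 then ((d3:ℝ)⁻¹:ℂ) else 0)) *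
            ((if u.2 = w.2 then ((d4:ℝ)⁻¹:ℂ) else 0) * (if u.2 = w.2 then ((d4:ℝ)⁻¹:ℂ) else 0)) := by
          rw [Fintype.sum_prod_type]
          refine Finset.sum_congr rfl fun u _ => Finset.sum_congr rfl fun w _ => ?_
          simp only [hD, _root_.map_mul, apply_ite (starRingEnd ℂ), _root_.map_inv₀, Complex.conj_ofReal, _root_.map_zero]
          ring
      _ = (∑ a : Fin d3, ∑ b : Fin d3,
            (if a = b then ((d3:ℝ)⁻¹:ℂ) else 0) * (if a = b then ((d3:ℝ)⁻¹:ℂ) else 0)) *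
            (∑ c : Fin d4, ∑ e : Fin d4,
              (if c = e then ((d4:ℝ)⁻¹:ℂ) else 0) * (if c = e then ((d4:ℝ)⁻¹:ℂ) else 0)) :=
          sum_factor (fun a b => (if a = b then ((d3:ℝ)⁻¹:ℂ) else 0) * (if a = b then ((d3:ℝ)⁻¹:ℂ) else 0))
            (fun c e => (if c = e then ((d4:ℝ)⁻¹:ℂ) else 0) * (if c = e then ((d4:ℝ)⁻¹:ℂ) else 0))
      _ = ((d3:ℝ)⁻¹:ℂ) * ((d4:ℝ)⁻¹:ℂ) := by rw [hI3, hI4]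
  have SBA : ∑ m : (Fin d3 × Fin d4) × (Fin d3 × Fin d4),
      B m.1 m.2 * (starRingEnd ℂ) (A m.1 m.2) = ((q:ℝ):ℂ) * ((d4:ℝ)⁻¹:ℂ) := by
    rw [conj_swap (fun m : (Fin d3 × Fin d4) × (Fin d3 × Fin d4) => B m.1 m.2) (fun m => A m.1 m.2), SAB]
    simp [_root_.map_mul, Complex.conj_ofReal]
  have SCA : ∑ m : (Fin d3 × Fin d4) × (Fin d3 × Fin d4),
      Cc m.1 m.2 * (starRingEnd ℂ) (A m.1 m.2) = ((q:ℝ):ℂ) * ((d3:ℝ)⁻¹:ℂ) := by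
    rw [conj_swap (fun m : (Fin d3 × Fin d4) × (Fin d3 × Fin d4) => Cc m.1 m.2) (fun m => A m.1 m.2), SAC]
    simp [_root_.map_mul, Complex.conj_ofReal]
  have SDA : ∑ m : (Fin d3 × Fin d4) × (Fin d3 × Fin d4),
      Dd m.1 m.2 * (starRingEnd ℂ) (A m.1 m.2) = ((d3:ℝ)⁻¹:ℂ) * ((d4:ℝ)⁻¹:ℂ) := by
    rw [conj_swap (fun m : (Fin d3 × Fin d4) × (Fin d3 × Fin d4) => Dd m.1 m.2) (fun m => A m.1 m.2), SAD]
    simp [_root_.map_mul, Complex.conj_ofReal]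
  have SCB : ∑ m : (Fin d3 × Fin d4) × (Fin d3 × Fin d4),
      Cc m.1 m.2 * (starRingEnd ℂ) (B m.1 m.2) = ((d3:ℝ)⁻¹:ℂ) * ((d4:ℝ)⁻¹:ℂ) := by
    rw [conj_swap (fun m : (Fin d3 × Fin d4) × (Fin d3 × Fin d4) => Cc m.1 m.2) (fun m => B m.1 m.2), SBC]
    simp [_root_.map_mul, Complex.conj_ofReal]
  have SDB : ∑ m : (Fin d3 × Fin d4) × (Fin d3 × Fin d4),
      Dd m.1 m.2 * (starRingEnd ℂ) (B m.1 m.2) = ((d3:ℝ)⁻¹:ℂ) * ((d4:ℝ)⁻¹:ℂ) := by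
    rw [conj_swap (fun m : (Fin d3 × Fin d4) × (Fin d3 × Fin d4) => Dd m.1 m.2) (fun m => B m.1 m.2), SBD]
    simp [_root_.map_mul, Complex.conj_ofReal]
  have SDC : ∑ m : (Fin d3 × Fin d4) × (Fin d3 × Fin d4),
      Dd m.1 m.2 * (starRingEnd ℂ) (Cc m.1 m.2) = ((d3:ℝ)⁻¹:ℂ) * ((d4:ℝ)⁻¹:ℂ) := by
    rw [conj_swap (fun m : (Fin d3 × Fin d4) × (Fin d3 × Fin d4) => Dd m.1 m.2) (fun m => Cc m.1 m.2), SCD]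
    simp [_root_.map_mul, Complex.conj_ofReal]
  have hbig : ∑ m : (Fin d3 × Fin d4) × (Fin d3 × Fin d4), X m * (starRingEnd ℂ) (X m)
      = ((1 + ((d3:ℝ) * d4)⁻¹ - q / d4 - q / d3 : ℝ) : ℂ) := by
    have expand : ∀ m : (Fin d3 × Fin d4) × (Fin d3 × Fin d4),
        X m * (starRingEnd ℂ) (X m)
          = A m.1 m.2 * (starRingEnd ℂ) (A m.1 m.2)
            - A m.1 m.2 * (starRingEnd ℂ) (B m.1 m.2)
            - A m.1 m.2 * (starRingEnd ℂ) (Cc m.1 m.2)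
            + A m.1 m.2 * (starRingEnd ℂ) (Dd m.1 m.2)
            - B m.1 m.2 * (starRingEnd ℂ) (A m.1 m.2)
            + B m.1 m.2 * (starRingEnd ℂ) (B m.1 m.2)
            + B m.1 m.2 * (starRingEnd ℂ) (Cc m.1 m.2)
            - B m.1 m.2 * (starRingEnd ℂ) (Dd m.1 m.2)
            - Cc m.1 m.2 * (starRingEnd ℂ) (A m.1 m.2)
            + Cc m.1 m.2 * (starRingEnd ℂ) (B m.1 m.2)
            + Cc m.1 m.2 * (starRingEnd ℂ) (Cc m.1 m.2)
            - Cc m.1 m.2 * (starRingEnd ℂ) (Dd m.1 m.2)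
            + Dd m.1 m.2 * (starRingEnd ℂ) (A m.1 m.2)
            - Dd m.1 m.2 * (starRingEnd ℂ) (B m.1 m.2)
            - Dd m.1 m.2 * (starRingEnd ℂ) (Cc m.1 m.2)
            + Dd m.1 m.2 * (starRingEnd ℂ) (Dd m.1 m.2) := by
      intro m
      simp only [hX, _root_.map_add, _root_.map_sub]
      ring
    rw [Finset.sum_congr rfl fun m _ => expand m]
    rw [Finset.sum_add_distrib, Finset.sum_sub_distrib, Finset.sum_sub_distrib, Finset.sum_add_distrib, Finset.sum_sub_distrib, Finset.sum_add_distrib, Finset.sum_add_distrib, Finset.sum_sub_distrib, Finset.sum_sub_distrib, Finset.sum_add_distrib, Finset.sum_add_distrib, Finset.sum_sub_distrib, Finset.sum_add_distrib, Finset.sum_sub_distrib, Finset.sum_sub_distrib]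
    rw [SAA, SAB, SAC, SAD, SBA, SBB, SBC, SBD, SCA, SCB, SCC, SCD, SDA, SDB, SDC, SDD]
    push_cast
    ring
  have hXnorm : ∑ m : (Fin d3 × Fin d4) × (Fin d3 × Fin d4), ‖X m‖ ^ 2
      = 1 + ((d3:ℝ) * d4)⁻¹ - q / d4 - q / d3 := by
    have h1 : (∑ m : (Fin d3 × Fin d4) × (Fin d3 × Fin d4), ‖X m‖ ^ 2 : ℝ)
        = (∑ m : (Fin d3 × Fin d4) × (Fin d3 × Fin d4), X m * (starRingEnd ℂ) (X m)).re := by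
      rw [Complex.re_sum]
      refine Finset.sum_congr rfl fun m _ => ?_
      rw [mul_conj_self, Complex.ofReal_re]
    rw [h1, hbig, Complex.ofReal_re]
  have hq34 : 1 + ((d3:ℝ) * d4)⁻¹ - q / d4 - q / d3 ≤ 1 - ((d3:ℝ)^2)⁻¹ := by
    have e1 : ((d3:ℝ) * d4)⁻¹ ≤ q / d4 := by
      rw [mul_inv, div_eq_mul_inv]
      exact mul_le_mul_of_nonneg_right hqge (by positivity)
    have e2 : ((d3:ℝ)^2)⁻¹ ≤ q / d3 := by
      rw [sq, mul_inv, div_eq_mul_inv]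
      exact mul_le_mul_of_nonneg_right hqge (by positivity)
    linarith
  calc ∑ ij : Fin n3 × Fin n4, ‖∑ u : Fin d3 × Fin d4, ∑ w : Fin d3 × Fin d4,
        ψ u * (starRingEnd ℂ) (ψ w) * (lam3 ij.1 w.1 u.1 * lam4 ij.2 w.2 u.2)‖ ^ 2
      = ∑ ij : Fin n3 × Fin n4,
          ‖∑ m : (Fin d3 × Fin d4) × (Fin d3 × Fin d4), (starRingEnd ℂ) (v ij m) * X m‖ ^ 2 :=
        Finset.sum_congr rfl fun ij _ => by rw [hinner]
    _ ≤ 4 * ∑ m : (Fin d3 × Fin d4) × (Fin d3 × Fin d4), ‖X m‖ ^ 2 := hbes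
    _ = 4 * (1 + ((d3:ℝ) * d4)⁻¹ - q / d4 - q / d3) := by rw [hXnorm]
    _ ≤ 4 * (1 - ((d3:ℝ)^2)⁻¹) := by linarith
    _ = 4 * ((d3:ℝ) ^ 2 - 1) / (d3:ℝ) ^ 2 := by
        field_simp
lemma cval_eq (x y z : ℝ) (hx : x ≠ 0) (hy : y ≠ 0) (hz : z ≠ 0) :
    2 * (x - 1) / x * (2 * (y - 1) / y * (4 * (z ^ 2 - 1) / z ^ 2))
      = 2 ^ 4 * (x - 1) * (y - 1) * (z ^ 2 - 1) / (x * y * z ^ 2) := by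
  field_simp
  ring

lemma sum_mul_sum' {α β M : Type*} [Fintype α] [Fintype β] [NonUnitalNonAssocSemiring M]
    (f : α → M) (g : β → M) :
    (∑ a, f a) * (∑ b, g b) = ∑ p : α × β, f p.1 * g p.2 := by
  rw [Finset.sum_mul_sum]
  exact (Fintype.sum_prod_type (f := fun p : α × β => f p.1 * g p.2)).symm

/-- For a (1,1,2)-separable four-partite state (convex combination of |φ₁⟩⊗|φ₂⟩⊗|φ₃₄⟩),
‖T^{(1234)}‖² ≤ 2⁴(d₁−1)(d₂−1)(d₃²−1)/(d₁d₂d₃²). -/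
theorem sep112_correlation_bound (d1 d2 d3 d4 : ℕ)
    (h1 : 2 ≤ d1) (h12 : d1 ≤ d2) (h23 : d2 ≤ d3) (h34 : d3 ≤ d4)
    (ρ : Matrix (Fin d1 × Fin d2 × Fin d3 × Fin d4) (Fin d1 × Fin d2 × Fin d3 × Fin d4) ℂ)
    (hsep : ∃ (N : ℕ) (p : Fin N → ℝ) (φ1 : Fin N → Fin d1 → ℂ) (φ2 : Fin N → Fin d2 → ℂ)
        (φ34 : Fin N → Fin d3 × Fin d4 → ℂ),
        (∀ k, 0 < p k) ∧ (∑ k, p k = 1) ∧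
        (∀ k, ∑ y, ‖φ1 k y‖ ^ 2 = 1) ∧ (∀ k, ∑ y, ‖φ2 k y‖ ^ 2 = 1) ∧
        (∀ k, ∑ y, ‖φ34 k y‖ ^ 2 = 1) ∧
        ρ = ∑ k, (p k : ℂ) •
          vecMulVec (fun x => φ1 k x.1 * φ2 k x.2.1 * φ34 k (x.2.2.1, x.2.2.2))
            (star fun x => φ1 k x.1 * φ2 k x.2.1 * φ34 k (x.2.2.1, x.2.2.2)))
    (lam1 : Fin (d1 ^ 2 - 1) → Matrix (Fin d1) (Fin d1) ℂ)
    (lam2 : Fin (d2 ^ 2 - 1) → Matrix (Fin d2) (Fin d2) ℂ)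
    (lam3 : Fin (d3 ^ 2 - 1) → Matrix (Fin d3) (Fin d3) ℂ)
    (lam4 : Fin (d4 ^ 2 - 1) → Matrix (Fin d4) (Fin d4) ℂ)
    (hherm1 : ∀ i, (lam1 i).IsHermitian) (hherm2 : ∀ i, (lam2 i).IsHermitian)
    (hherm3 : ∀ i, (lam3 i).IsHermitian) (hherm4 : ∀ i, (lam4 i).IsHermitian)
    (htr01 : ∀ i, (lam1 i).trace = 0) (htr02 : ∀ i, (lam2 i).trace = 0)
    (htr03 : ∀ i, (lam3 i).trace = 0) (htr04 : ∀ i, (lam4 i).trace = 0)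
    (horth1 : ∀ i j, (lam1 i * lam1 j).trace = if i = j then 2 else 0)
    (horth2 : ∀ i j, (lam2 i * lam2 j).trace = if i = j then 2 else 0)
    (horth3 : ∀ i j, (lam3 i * lam3 j).trace = if i = j then 2 else 0)
    (horth4 : ∀ i j, (lam4 i * lam4 j).trace = if i = j then 2 else 0) :
    ∑ i : Fin (d1 ^ 2 - 1) × Fin (d2 ^ 2 - 1) × Fin (d3 ^ 2 - 1) × Fin (d4 ^ 2 - 1),
        ‖(ρ * kron4 (lam1 i.1) (lam2 i.2.1) (lam3 i.2.2.1) (lam4 i.2.2.2)).trace‖ ^ 2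
      ≤ 2 ^ 4 * ((d1 : ℝ) - 1) * ((d2 : ℝ) - 1) * ((d3 : ℝ) ^ 2 - 1)
          / ((d1 : ℝ) * (d2 : ℝ) * (d3 : ℝ) ^ 2) := by
  classical
  obtain ⟨N, p, φ1, φ2, φ34, hp, hpsum, hn1, hn2, hn34, hρeq⟩ := hsep
  have hd11 : 1 ≤ d1 := by omega
  have hd21 : 1 ≤ d2 := by omega
  have hd31 : 1 ≤ d3 := by omega
  have hg1 : (2:ℝ) ≤ d1 := by exact_mod_cast h1
  have hg2 : (2:ℝ) ≤ d2 := by exact_mod_cast (by omega : 2 ≤ d2)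
  have hg3 : (2:ℝ) ≤ d3 := by exact_mod_cast (by omega : 2 ≤ d3)
  have hr1 : (0:ℝ) < d1 := by linarith
  have hr2 : (0:ℝ) < d2 := by linarith
  have hr3 : (0:ℝ) < d3 := by linarith
  set t1 : Fin N → Fin (d1 ^ 2 - 1) → ℂ :=
    fun k i => ∑ a, ∑ b, φ1 k a * (starRingEnd ℂ) (φ1 k b) * lam1 i b a with ht1
  set t2 : Fin N → Fin (d2 ^ 2 - 1) → ℂ :=
    fun k i => ∑ a, ∑ b, φ2 k a * (starRingEnd ℂ) (φ2 k b) * lam2 i b a with ht2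
  set t34 : Fin N → Fin (d3 ^ 2 - 1) × Fin (d4 ^ 2 - 1) → ℂ :=
    fun k ij => ∑ u : Fin d3 × Fin d4, ∑ w : Fin d3 × Fin d4,
      φ34 k u * (starRingEnd ℂ) (φ34 k w) * (lam3 ij.1 w.1 u.1 * lam4 ij.2 w.2 u.2) with ht34
  set c : Fin N → (Fin (d1 ^ 2 - 1) × Fin (d2 ^ 2 - 1) × Fin (d3 ^ 2 - 1) × Fin (d4 ^ 2 - 1)) → ℂ :=
    fun k i => t1 k i.1 * (t2 k i.2.1 * t34 k (i.2.2.1, i.2.2.2)) with hcdef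
  have hb1 : ∀ k, ∑ i, ‖t1 k i‖ ^ 2 ≤ 2 * ((d1:ℝ) - 1) / d1 :=
    fun k => single_bound hd11 lam1 hherm1 htr01 horth1 (φ1 k) (hn1 k)
  have hb2 : ∀ k, ∑ i, ‖t2 k i‖ ^ 2 ≤ 2 * ((d2:ℝ) - 1) / d2 :=
    fun k => single_bound hd21 lam2 hherm2 htr02 horth2 (φ2 k) (hn2 k)
  have hb34 : ∀ k, ∑ ij : Fin (d3 ^ 2 - 1) × Fin (d4 ^ 2 - 1), ‖t34 k ij‖ ^ 2
      ≤ 4 * ((d3:ℝ) ^ 2 - 1) / (d3:ℝ) ^ 2 :=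
    fun k => pair_bound hd31 h34 lam3 lam4 hherm3 hherm4 htr03 htr04 horth3 horth4
      (φ34 k) (hn34 k)
  have hfactor : ∀ k (i : Fin (d1 ^ 2 - 1) × Fin (d2 ^ 2 - 1) × Fin (d3 ^ 2 - 1) × Fin (d4 ^ 2 - 1)),
      (vecMulVec (fun x : Fin d1 × Fin d2 × Fin d3 × Fin d4 =>
          φ1 k x.1 * φ2 k x.2.1 * φ34 k (x.2.2.1, x.2.2.2))
        (star fun x : Fin d1 × Fin d2 × Fin d3 × Fin d4 =>
          φ1 k x.1 * φ2 k x.2.1 * φ34 k (x.2.2.1, x.2.2.2)) *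
        kron4 (lam1 i.1) (lam2 i.2.1) (lam3 i.2.2.1) (lam4 i.2.2.2)).trace = c k i := by
    intro k i
    calc (vecMulVec (fun x : Fin d1 × Fin d2 × Fin d3 × Fin d4 =>
          φ1 k x.1 * φ2 k x.2.1 * φ34 k (x.2.2.1, x.2.2.2))
        (star fun x : Fin d1 × Fin d2 × Fin d3 × Fin d4 =>
          φ1 k x.1 * φ2 k x.2.1 * φ34 k (x.2.2.1, x.2.2.2)) *
        kron4 (lam1 i.1) (lam2 i.2.1) (lam3 i.2.2.1) (lam4 i.2.2.2)).trace
        = ∑ x : Fin d1 × Fin d2 × Fin d3 × Fin d4, ∑ y : Fin d1 × Fin d2 × Fin d3 × Fin d4,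
            (φ1 k x.1 * φ2 k x.2.1 * φ34 k (x.2.2.1, x.2.2.2)) *
              (starRingEnd ℂ) (φ1 k y.1 * φ2 k y.2.1 * φ34 k (y.2.2.1, y.2.2.2)) *
              (lam1 i.1 y.1 x.1 * lam2 i.2.1 y.2.1 x.2.1 * lam3 i.2.2.1 y.2.2.1 x.2.2.1 *
                lam4 i.2.2.2 y.2.2.2 x.2.2.2) := by
          simp only [Matrix.trace, Matrix.diag, Matrix.mul_apply, Matrix.vecMulVec_apply,
            kron4, Pi.star_apply, RCLike.star_def]
      _ = ∑ m : (Fin d1 × Fin d2 × Fin d3 × Fin d4) × (Fin d1 × Fin d2 × Fin d3 × Fin d4),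
            (φ1 k m.1.1 * φ2 k m.1.2.1 * φ34 k (m.1.2.2.1, m.1.2.2.2)) *
              (starRingEnd ℂ) (φ1 k m.2.1 * φ2 k m.2.2.1 * φ34 k (m.2.2.2.1, m.2.2.2.2)) *
              (lam1 i.1 m.2.1 m.1.1 * lam2 i.2.1 m.2.2.1 m.1.2.1 * lam3 i.2.2.1 m.2.2.2.1 m.1.2.2.1 *
                lam4 i.2.2.2 m.2.2.2.2 m.1.2.2.2) :=
          (Fintype.sum_prod_type
            (f := fun m : (Fin d1 × Fin d2 × Fin d3 × Fin d4) × (Fin d1 × Fin d2 × Fin d3 × Fin d4) =>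
              (φ1 k m.1.1 * φ2 k m.1.2.1 * φ34 k (m.1.2.2.1, m.1.2.2.2)) *
                (starRingEnd ℂ) (φ1 k m.2.1 * φ2 k m.2.2.1 * φ34 k (m.2.2.2.1, m.2.2.2.2)) *
                (lam1 i.1 m.2.1 m.1.1 * lam2 i.2.1 m.2.2.1 m.1.2.1 * lam3 i.2.2.1 m.2.2.2.1 m.1.2.2.1 *
                  lam4 i.2.2.2 m.2.2.2.2 m.1.2.2.2))).symm
      _ = ∑ r : (Fin d1 × Fin d1) × ((Fin d2 × Fin d2) × ((Fin d3 × Fin d4) × (Fin d3 × Fin d4))),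
            (φ1 k r.1.1 * (starRingEnd ℂ) (φ1 k r.1.2) * lam1 i.1 r.1.2 r.1.1) *
            ((φ2 k r.2.1.1 * (starRingEnd ℂ) (φ2 k r.2.1.2) * lam2 i.2.1 r.2.1.2 r.2.1.1) *
             (φ34 k r.2.2.1 * (starRingEnd ℂ) (φ34 k r.2.2.2) *
               (lam3 i.2.2.1 r.2.2.2.1 r.2.2.1.1 * lam4 i.2.2.2 r.2.2.2.2 r.2.2.1.2))) := by
          refine Fintype.sum_equiv
            ⟨fun m => ((m.1.1, m.2.1), ((m.1.2.1, m.2.2.1), (m.1.2.2, m.2.2.2))),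
             fun r => ((r.1.1, r.2.1.1, r.2.2.1), (r.1.2, r.2.1.2, r.2.2.2)),
             fun m => rfl, fun r => rfl⟩ _ _ fun m => ?_
          simp only [Equiv.coe_fn_mk, _root_.map_mul]
          ring
      _ = c k i := by
          rw [hcdef]
          dsimp only
          rw [show t1 k i.1 = ∑ m1 : Fin d1 × Fin d1,
              φ1 k m1.1 * (starRingEnd ℂ) (φ1 k m1.2) * lam1 i.1 m1.2 m1.1 from
            (Fintype.sum_prod_type (f := fun m1 : Fin d1 × Fin d1 =>
              φ1 k m1.1 * (starRingEnd ℂ) (φ1 k m1.2) * lam1 i.1 m1.2 m1.1)).symm]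
          rw [show t2 k i.2.1 = ∑ m2 : Fin d2 × Fin d2,
              φ2 k m2.1 * (starRingEnd ℂ) (φ2 k m2.2) * lam2 i.2.1 m2.2 m2.1 from
            (Fintype.sum_prod_type (f := fun m2 : Fin d2 × Fin d2 =>
              φ2 k m2.1 * (starRingEnd ℂ) (φ2 k m2.2) * lam2 i.2.1 m2.2 m2.1)).symm]
          rw [show t34 k (i.2.2.1, i.2.2.2) = ∑ m34 : (Fin d3 × Fin d4) × (Fin d3 × Fin d4),
              φ34 k m34.1 * (starRingEnd ℂ) (φ34 k m34.2) *
                (lam3 i.2.2.1 m34.2.1 m34.1.1 * lam4 i.2.2.2 m34.2.2 m34.1.2) from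
            (Fintype.sum_prod_type (f := fun m34 : (Fin d3 × Fin d4) × (Fin d3 × Fin d4) =>
              φ34 k m34.1 * (starRingEnd ℂ) (φ34 k m34.2) *
                (lam3 i.2.2.1 m34.2.1 m34.1.1 * lam4 i.2.2.2 m34.2.2 m34.1.2))).symm]
          rw [sum_mul_sum', sum_mul_sum']
  have htrace : ∀ i : Fin (d1 ^ 2 - 1) × Fin (d2 ^ 2 - 1) × Fin (d3 ^ 2 - 1) × Fin (d4 ^ 2 - 1),
      (ρ * kron4 (lam1 i.1) (lam2 i.2.1) (lam3 i.2.2.1) (lam4 i.2.2.2)).trace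
        = ∑ k, (p k : ℂ) * c k i := by
    intro i
    rw [hρeq, Finset.sum_mul, Matrix.trace_sum]
    refine Finset.sum_congr rfl fun k _ => ?_
    rw [Matrix.smul_mul, Matrix.trace_smul, smul_eq_mul, hfactor k i]
  set Cv : ℝ := 2 * ((d1:ℝ) - 1) / d1 * (2 * ((d2:ℝ) - 1) / d2 *
    (4 * ((d3:ℝ) ^ 2 - 1) / (d3:ℝ) ^ 2)) with hCv
  have hC1 : (0:ℝ) ≤ 2 * ((d1:ℝ) - 1) / d1 := by
    apply div_nonneg _ hr1.le; nlinarith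
  have hC2 : (0:ℝ) ≤ 2 * ((d2:ℝ) - 1) / d2 := by
    apply div_nonneg _ hr2.le; nlinarith
  have hC34 : (0:ℝ) ≤ 4 * ((d3:ℝ) ^ 2 - 1) / (d3:ℝ) ^ 2 := by
    apply div_nonneg _ (by positivity); nlinarith
  have hCv0 : (0:ℝ) ≤ Cv := by
    rw [hCv]; exact mul_nonneg hC1 (mul_nonneg hC2 hC34)
  have hck : ∀ k, ∑ i : Fin (d1 ^ 2 - 1) × Fin (d2 ^ 2 - 1) × Fin (d3 ^ 2 - 1) × Fin (d4 ^ 2 - 1),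
      ‖c k i‖ ^ 2 ≤ Cv := by
    intro k
    have hfact : ∑ i : Fin (d1 ^ 2 - 1) × Fin (d2 ^ 2 - 1) × Fin (d3 ^ 2 - 1) × Fin (d4 ^ 2 - 1),
        ‖c k i‖ ^ 2
        = (∑ i1, ‖t1 k i1‖ ^ 2) * ((∑ i2, ‖t2 k i2‖ ^ 2) *
            (∑ ij : Fin (d3 ^ 2 - 1) × Fin (d4 ^ 2 - 1), ‖t34 k ij‖ ^ 2)) := by
      rw [sum_mul_sum' (fun i2 => ‖t2 k i2‖ ^ 2)
          (fun ij : Fin (d3 ^ 2 - 1) × Fin (d4 ^ 2 - 1) => ‖t34 k ij‖ ^ 2),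
        sum_mul_sum' (fun i1 => ‖t1 k i1‖ ^ 2)
          (fun pr : Fin (d2 ^ 2 - 1) × (Fin (d3 ^ 2 - 1) × Fin (d4 ^ 2 - 1)) =>
            ‖t2 k pr.1‖ ^ 2 * ‖t34 k pr.2‖ ^ 2)]
      refine Finset.sum_congr rfl fun i _ => ?_
      simp only [hcdef, norm_mul, mul_pow]
    rw [hfact, hCv]
    refine mul_le_mul (hb1 k) ?_ (by positivity) hC1
    refine mul_le_mul (hb2 k) (hb34 k) (by positivity) hC2
  set W : Fin N → EuclideanSpace ℂ
      (Fin (d1 ^ 2 - 1) × Fin (d2 ^ 2 - 1) × Fin (d3 ^ 2 - 1) × Fin (d4 ^ 2 - 1)) :=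
    fun k => (WithLp.equiv 2 _).symm (c k) with hWdef
  have hWnorm : ∀ k, ‖W k‖ ≤ Real.sqrt Cv := by
    intro k
    have h2 : ‖W k‖ ^ 2 = ∑ i, ‖c k i‖ ^ 2 := by
      rw [EuclideanSpace.norm_eq, Real.sq_sqrt (by positivity)]
      rfl
    calc ‖W k‖ = Real.sqrt (‖W k‖ ^ 2) := (Real.sqrt_sq (norm_nonneg _)).symm
      _ ≤ Real.sqrt Cv := Real.sqrt_le_sqrt (by rw [h2]; exact hck k)
  set S : EuclideanSpace ℂ
      (Fin (d1 ^ 2 - 1) × Fin (d2 ^ 2 - 1) × Fin (d3 ^ 2 - 1) × Fin (d4 ^ 2 - 1)) :=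
    ∑ k, (p k : ℂ) • W k with hSdef
  have hSle : ‖S‖ ≤ Real.sqrt Cv := by
    calc ‖S‖ ≤ ∑ k, ‖(p k : ℂ) • W k‖ := by rw [hSdef]; exact norm_sum_le _ _
      _ = ∑ k, p k * ‖W k‖ := by
          refine Finset.sum_congr rfl fun k _ => ?_
          rw [norm_smul, Complex.norm_real, Real.norm_eq_abs, abs_of_pos (hp k)]
      _ ≤ ∑ k, p k * Real.sqrt Cv :=
          Finset.sum_le_sum fun k _ => mul_le_mul_of_nonneg_left (hWnorm k) (hp k).le
      _ = Real.sqrt Cv := by rw [← Finset.sum_mul, hpsum, one_mul]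
  have hS_i : ∀ i, S i = ∑ k, (p k : ℂ) * c k i := by
    intro i
    rw [hSdef]
    calc (∑ k, (p k : ℂ) • W k) i = ∑ k, ((p k : ℂ) • W k) i :=
          by rw [WithLp.ofLp_sum, Finset.sum_apply]
      _ = ∑ k, (p k : ℂ) * c k i := Finset.sum_congr rfl fun k _ => rfl
  have hSnorm2 : ∑ i : Fin (d1 ^ 2 - 1) × Fin (d2 ^ 2 - 1) × Fin (d3 ^ 2 - 1) × Fin (d4 ^ 2 - 1),
      ‖∑ k, (p k : ℂ) * c k i‖ ^ 2 ≤ Cv := by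
    calc ∑ i : Fin (d1 ^ 2 - 1) × Fin (d2 ^ 2 - 1) × Fin (d3 ^ 2 - 1) × Fin (d4 ^ 2 - 1),
        ‖∑ k, (p k : ℂ) * c k i‖ ^ 2
        = ∑ i : Fin (d1 ^ 2 - 1) × Fin (d2 ^ 2 - 1) × Fin (d3 ^ 2 - 1) × Fin (d4 ^ 2 - 1),
            ‖S i‖ ^ 2 := by
          refine Finset.sum_congr rfl fun i _ => ?_
          rw [hS_i i]
      _ = ‖S‖ ^ 2 := by
          rw [EuclideanSpace.norm_eq, Real.sq_sqrt (by positivity)]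
      _ ≤ Real.sqrt Cv ^ 2 := pow_le_pow_left₀ (norm_nonneg _) hSle 2
      _ = Cv := Real.sq_sqrt hCv0
  calc ∑ i : Fin (d1 ^ 2 - 1) × Fin (d2 ^ 2 - 1) × Fin (d3 ^ 2 - 1) × Fin (d4 ^ 2 - 1),
      ‖(ρ * kron4 (lam1 i.1) (lam2 i.2.1) (lam3 i.2.2.1) (lam4 i.2.2.2)).trace‖ ^ 2
      = ∑ i : Fin (d1 ^ 2 - 1) × Fin (d2 ^ 2 - 1) × Fin (d3 ^ 2 - 1) × Fin (d4 ^ 2 - 1),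
          ‖∑ k, (p k : ℂ) * c k i‖ ^ 2 := by
        refine Finset.sum_congr rfl fun i _ => ?_
        rw [htrace i]
    _ ≤ Cv := hSnorm2
    _ = 2 ^ 4 * ((d1 : ℝ) - 1) * ((d2 : ℝ) - 1) * ((d3 : ℝ) ^ 2 - 1)
          / ((d1 : ℝ) * (d2 : ℝ) * (d3 : ℝ) ^ 2) := by
        rw [hCv]
        exact cval_eq _ _ _ hr1.ne' hr2.ne' hr3.ne'
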